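/- For every sorted probability distribution p_1 ≥ ⋯ ≥ p_N ≥ 0 and every lying probability 0 ≤ p ≤ 1/2, the zigzag query is at worst halfway between the no-query and the optimal-query guessing times: G_ZZ(X) ≤ (1/2)·(G(X) + G_opt(X)). -/

import Mathlib

open Finset

noncomputable def guess (N : ℕ) (q : Fin N → ℝ) : ℝ :=
  Finset.univ.inf' ⟨1, Finset.mem_univ 1⟩
    (fun σ : Equiv.Perm (Fin N) => ∑ k : Fin N, ((k : ℝ) + 1) * q (σ k))

noncomputable def guessA (N : ℕ) (q : Fin N → ℝ) (p : ℝ) (A : Finset (Fin N)) : ℝ :=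
  ∑ y : Bool, Finset.univ.inf' ⟨1, Finset.mem_univ 1⟩
    (fun σ : Equiv.Perm (Fin N) => ∑ k : Fin N,
      ((k : ℝ) + 1) * q (σ k) * (if ((σ k ∈ A) ↔ (y = true)) then 1 - p else p))

noncomputable def guessOpt (N : ℕ) (q : Fin N → ℝ) (p : ℝ) : ℝ :=
  Finset.univ.inf' ⟨∅, Finset.mem_univ ∅⟩ (fun A : Finset (Fin N) => guessA N q p A)

def zigzag (N : ℕ) : Finset (Fin N) := Finset.univ.filter (fun k => (k : ℕ) % 2 = 0)

noncomputable def wt (N : ℕ) (q : Fin N → ℝ) (p : ℝ) (i j : Fin N) : ℝ :=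
  max 0 ((1 - p) * min (q i) (q j) - p * max (q i) (q j))

noncomputable def cut (N : ℕ) (q : Fin N → ℝ) (p : ℝ) (A : Finset (Fin N)) : ℝ :=
  ∑ i ∈ A, ∑ j ∈ Aᶜ, wt N q p i j

noncomputable def maxcut (N : ℕ) (q : Fin N → ℝ) (p : ℝ) : ℝ :=
  Finset.univ.sup' ⟨∅, Finset.mem_univ ∅⟩ (fun A : Finset (Fin N) => cut N q p A)

/-! ### Auxiliary definitions and lemmas -/

def pairsF (N : ℕ) : Finset (Fin N × Fin N) := univ.filter (fun x => x.1 < x.2)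

noncomputable def PMS (N : ℕ) (v : Fin N → ℝ) : ℝ := ∑ x ∈ pairsF N, min (v x.1) (v x.2)

noncomputable def cutp (N : ℕ) (q : Fin N → ℝ) (p : ℝ) (A : Finset (Fin N)) : ℝ :=
  ∑ x ∈ pairsF N, (if ((x.1 ∈ A) ↔ (x.2 ∈ A)) then 0 else wt N q p x.1 x.2)

lemma sumA (N : ℕ) (g : Fin N → Fin N → ℝ) (hsym : ∀ i j, g i j = g j i) :
    2 * (∑ x ∈ pairsF N, g x.1 x.2) = ∑ i, ∑ j, (if i = j then 0 else g i j) := by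
  have key : ∀ i j : Fin N, (if i = j then (0:ℝ) else g i j)
      = (if i < j then g i j else 0) + (if j < i then g i j else 0) := by
    intro i j
    rcases lt_trichotomy i j with h | h | h
    · simp [h, h.ne, not_lt.2 h.le]
    · simp [h]
    · simp [h, h.ne', not_lt.2 h.le]
  have h1 : ∑ x ∈ pairsF N, g x.1 x.2 = ∑ i, ∑ j, (if i < j then g i j else 0) := by
    rw [pairsF, sum_filter, ← Finset.univ_product_univ, Finset.sum_product]
  have h2 : ∑ x ∈ pairsF N, g x.1 x.2 = ∑ i, ∑ j, (if j < i then g i j else 0) := by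
    rw [h1, Finset.sum_comm]
    exact Finset.sum_congr rfl fun i _ => Finset.sum_congr rfl fun j _ => by
      by_cases h : j < i <;> simp [h, hsym]
  simp only [key, Finset.sum_add_distrib]
  rw [← h1, ← h2]; ring

lemma sumB (N : ℕ) (v : Fin N → ℝ) (σ : Equiv.Perm (Fin N)) :
    ∑ x ∈ pairsF N, min (v (σ x.1)) (v (σ x.2)) = PMS N v := by
  have hA := sumA N (fun i j => min (v (σ i)) (v (σ j))) (fun i j => min_comm _ _)
  have hB := sumA N (fun i j => min (v i) (v j)) (fun i j => min_comm _ _)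
  have hmid : ∑ i, ∑ j, (if i = j then (0:ℝ) else min (v (σ i)) (v (σ j)))
      = ∑ i, ∑ j, (if i = j then 0 else min (v i) (v j)) := by
    calc ∑ i, ∑ j, (if i = j then (0:ℝ) else min (v (σ i)) (v (σ j)))
        = ∑ i, ∑ j, (if σ i = σ j then (0:ℝ) else min (v (σ i)) (v (σ j))) := by
          refine Finset.sum_congr rfl fun i _ => Finset.sum_congr rfl fun j _ => by
            simp [σ.injective.eq_iff]
      _ = ∑ a, ∑ j, (if a = σ j then (0:ℝ) else min (v a) (v (σ j))) :=
          Equiv.sum_comp σ (fun a => ∑ j, (if a = σ j then (0:ℝ) else min (v a) (v (σ j))))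
      _ = ∑ a, ∑ b, (if a = b then (0:ℝ) else min (v a) (v b)) :=
          Finset.sum_congr rfl fun a _ =>
            Equiv.sum_comp σ (fun b => (if a = b then (0:ℝ) else min (v a) (v b)))
  unfold PMS; linarith [hA, hB, hmid]

lemma sumC0 (N : ℕ) (v : Fin N → ℝ) (σ : Equiv.Perm (Fin N)) :
    ∑ k : Fin N, ((k : ℝ) + 1) * v (σ k)
      = ∑ i, v i + ∑ x ∈ pairsF N, v (σ x.2) := by
  have h1 : ∑ k : Fin N, v (σ k) = ∑ i, v i := Equiv.sum_comp σ v
  have h2 : ∑ x ∈ pairsF N, v (σ x.2) = ∑ k : Fin N, (k : ℝ) * v (σ k) := by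
    rw [pairsF, sum_filter, ← Finset.univ_product_univ, Finset.sum_product_right]
    refine Finset.sum_congr rfl fun j _ => ?_
    have hx : ∀ x : Fin N, (if (x, j).1 < (x, j).2 then v (σ (x, j).2) else (0:ℝ))
        = (if x < j then v (σ j) else 0) := fun x => rfl
    simp only [hx]
    rw [Finset.sum_ite, Finset.sum_const, Finset.sum_const_zero, add_zero]
    have hc : (univ.filter (fun i : Fin N => i < j)).card = (j : ℕ) := by
      have : (univ.filter (fun i : Fin N => i < j)) = Finset.Iio j := by
        ext i; simp
      rw [this, Fin.card_Iio]
    rw [hc, nsmul_eq_mul]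
  have h3 : ∑ k : Fin N, ((k : ℝ) + 1) * v (σ k)
      = ∑ k : Fin N, v (σ k) + ∑ k : Fin N, (k : ℝ) * v (σ k) := by
    rw [← Finset.sum_add_distrib]; exact Finset.sum_congr rfl fun k _ => by ring
  rw [h3, h1, h2]

lemma sumC (N : ℕ) (v : Fin N → ℝ) :
    (univ.inf' ⟨1, Finset.mem_univ 1⟩
      (fun σ : Equiv.Perm (Fin N) => ∑ k : Fin N, ((k : ℝ) + 1) * v (σ k)))
    = ∑ i, v i + PMS N v := by
  apply le_antisymm
  · set σ := Tuple.sort (fun k => -v k) with hσ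
    have hmono : Monotone ((fun k => -v k) ∘ σ) := Tuple.monotone_sort _
    have hanti : ∀ x ∈ pairsF N, min (v (σ x.1)) (v (σ x.2)) = v (σ x.2) := by
      intro x hx
      have hlt : x.1 < x.2 := by simpa [pairsF] using hx
      have := hmono hlt.le
      simp only [Function.comp] at this
      exact min_eq_right (by linarith)
    have hval : ∑ k : Fin N, ((k : ℝ) + 1) * v (σ k) = ∑ i, v i + PMS N v := by
      rw [sumC0, ← sumB N v σ]
      congr 1
      exact (Finset.sum_congr rfl hanti).symm
    exact hval ▸ Finset.inf'_le _ (Finset.mem_univ σ)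
  · apply Finset.le_inf'
    intro σ _
    rw [sumC0]
    have hB : PMS N v = ∑ x ∈ pairsF N, min (v (σ x.1)) (v (σ x.2)) := (sumB N v σ).symm
    rw [hB]
    exact add_le_add le_rfl (Finset.sum_le_sum fun x _ => min_le_right _ _)

lemma pair_id (a b p : ℝ) (ha : 0 ≤ a) (hb : 0 ≤ b) (hp0 : 0 ≤ p) (hp : p ≤ 1/2) :
    min (a * (1 - p)) (b * p) + min (a * p) (b * (1 - p))
      = min a b - max 0 ((1 - p) * min a b - p * max a b) := by
  rcases le_total a b with h | h
  · rw [min_eq_left h, max_eq_right h]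
    have k1 : a * p ≤ b * (1 - p) := by nlinarith
    rw [min_eq_left k1]
    rcases le_total (a * (1 - p)) (b * p) with h2 | h2
    · rw [min_eq_left h2, max_eq_left (by nlinarith : (1 - p) * a - p * b ≤ 0)]; ring
    · rw [min_eq_right h2, max_eq_right (by nlinarith : (0:ℝ) ≤ (1 - p) * a - p * b)]; ring
  · rw [min_eq_right h, max_eq_left h]
    have k1 : b * p ≤ a * (1 - p) := by nlinarith
    rw [min_eq_right k1]
    rcases le_total (a * p) (b * (1 - p)) with h2 | h2
    · rw [min_eq_left h2, max_eq_right (by nlinarith : (0:ℝ) ≤ (1 - p) * b - p * a)]; ring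
    · rw [min_eq_right h2, max_eq_left (by nlinarith : (1 - p) * b - p * a ≤ 0)]; ring

lemma pair_bool (N : ℕ) (q : Fin N → ℝ) (p : ℝ) (A : Finset (Fin N))
    (hnn : ∀ i, 0 ≤ q i) (hp0 : 0 ≤ p) (hp : p ≤ 1/2) (i j : Fin N) :
    (min (q i * (if ((i ∈ A) ↔ (true = true)) then 1 - p else p))
        (q j * (if ((j ∈ A) ↔ (true = true)) then 1 - p else p)))
    + (min (q i * (if ((i ∈ A) ↔ (false = true)) then 1 - p else p))
        (q j * (if ((j ∈ A) ↔ (false = true)) then 1 - p else p)))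
      = min (q i) (q j) - (if ((i ∈ A) ↔ (j ∈ A)) then 0 else wt N q p i j) := by
  have h1p : (0:ℝ) ≤ 1 - p := by linarith
  by_cases hi : i ∈ A <;> by_cases hj : j ∈ A <;>
    simp only [hi, hj, wt] <;> norm_num
  · rw [← min_mul_of_nonneg _ _ h1p, ← min_mul_of_nonneg _ _ hp0]; ring
  · exact pair_id (q i) (q j) p (hnn i) (hnn j) hp0 hp
  · have := pair_id (q j) (q i) p (hnn j) (hnn i) hp0 hp
    rw [min_comm (q j) (q i), max_comm (q j) (q i)] at this
    rw [min_comm (q i * p), min_comm (q i * (1 - p))]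
    linarith
  · rw [← min_mul_of_nonneg _ _ hp0, ← min_mul_of_nonneg _ _ h1p]; ring

lemma guessA_eq (N : ℕ) (q : Fin N → ℝ) (p : ℝ) (A : Finset (Fin N))
    (hnn : ∀ i, 0 ≤ q i) (hp0 : 0 ≤ p) (hp : p ≤ 1/2) :
    guessA N q p A = ∑ i, q i + PMS N q - cutp N q p A := by
  unfold guessA
  simp only [mul_assoc]
  rw [Fintype.sum_bool]
  rw [sumC N (fun i => q i * if ((i ∈ A) ↔ (true = true)) then 1 - p else p),
      sumC N (fun i => q i * if ((i ∈ A) ↔ (false = true)) then 1 - p else p)]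
  have hsum1 : (∑ i, (q i * if ((i ∈ A) ↔ (true = true)) then 1 - p else p))
      + (∑ i, (q i * if ((i ∈ A) ↔ (false = true)) then 1 - p else p)) = ∑ i, q i := by
    rw [← Finset.sum_add_distrib]
    refine Finset.sum_congr rfl fun i _ => ?_
    by_cases hi : i ∈ A <;> simp [hi] <;> ring
  have hsum2 : PMS N (fun i => q i * if ((i ∈ A) ↔ (true = true)) then 1 - p else p)
      + PMS N (fun i => q i * if ((i ∈ A) ↔ (false = true)) then 1 - p else p)
      = PMS N q - cutp N q p A := by
    unfold PMS cutp
    rw [← Finset.sum_add_distrib, ← Finset.sum_sub_distrib]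
    exact Finset.sum_congr rfl fun x _ => pair_bool N q p A hnn hp0 hp x.1 x.2
  linarith [hsum1, hsum2]

lemma wt_nonneg (N : ℕ) (q : Fin N → ℝ) (p : ℝ) (i j : Fin N) : 0 ≤ wt N q p i j :=
  le_max_left _ _

lemma cutp_le (N : ℕ) (q : Fin N → ℝ) (p : ℝ) (A : Finset (Fin N))
    (hsort : ∀ i j : Fin N, i ≤ j → q j ≤ q i) (hp : p ≤ 1/2) :
    cutp N q p A ≤ 2 * cutp N q p (zigzag N) := by
  classical
  have hform : ∀ B : Finset (Fin N), cutp N q p B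
      = ∑ x ∈ (pairsF N).filter (fun x => ¬((x.1 ∈ B) ↔ (x.2 ∈ B))), wt N q p x.1 x.2 := by
    intro B
    rw [cutp, Finset.sum_filter]
    exact Finset.sum_congr rfl fun x _ => by
      by_cases h : ((x.1 ∈ B) ↔ (x.2 ∈ B)) <;> simp [h]
  have hZZ : (pairsF N).filter (fun x => ¬((x.1 ∈ zigzag N) ↔ (x.2 ∈ zigzag N)))
      = (pairsF N).filter (fun x => ¬(((x.1 : ℕ) % 2 = 0) ↔ ((x.2 : ℕ) % 2 = 0))) := by
    apply Finset.filter_congr; intro x _; simp [zigzag]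
  rw [hform A, hform (zigzag N), hZZ]
  set T := (pairsF N).filter (fun x => ¬(((x.1 : ℕ) % 2 = 0) ↔ ((x.2 : ℕ) % 2 = 0))) with hT
  set S := (pairsF N).filter (fun x => ¬((x.1 ∈ A) ↔ (x.2 ∈ A))) with hS
  rw [← Finset.sum_filter_add_sum_filter_not S
    (fun x => ¬(((x.1 : ℕ) % 2 = 0) ↔ ((x.2 : ℕ) % 2 = 0))) (fun x => wt N q p x.1 x.2)]
  have hpart1 : ∑ x ∈ S.filter (fun x => ¬(((x.1 : ℕ) % 2 = 0) ↔ ((x.2 : ℕ) % 2 = 0))),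
      wt N q p x.1 x.2 ≤ ∑ x ∈ T, wt N q p x.1 x.2 := by
    apply Finset.sum_le_sum_of_subset_of_nonneg
    · rw [hT, hS]
      intro x hx
      simp only [Finset.mem_filter] at hx ⊢
      exact ⟨hx.1.1, hx.2⟩
    · intro x _ _; exact wt_nonneg N q p x.1 x.2
  -- second part
  set S2 := S.filter (fun x => ¬¬(((x.1 : ℕ) % 2 = 0) ↔ ((x.2 : ℕ) % 2 = 0))) with hS2
  have hmemS2 : ∀ x ∈ S2, (x.1 : ℕ) + 1 < (x.2 : ℕ) := by
    intro x hx
    rw [hS2, hS] at hx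
    simp only [Finset.mem_filter, pairsF, Finset.mem_univ, true_and, not_not] at hx
    have hlt : (x.1 : ℕ) < (x.2 : ℕ) := hx.1.1
    have hiff := hx.2
    have hx1 : (x.1 : ℕ) % 2 = (x.2 : ℕ) % 2 := by
      rcases Nat.mod_two_eq_zero_or_one (x.1 : ℕ) with h1 | h1 <;>
        rcases Nat.mod_two_eq_zero_or_one (x.2 : ℕ) with h2 | h2 <;>
        simp [h1, h2] at hiff ⊢
    omega
  set e : Fin N × Fin N → Fin N × Fin N :=
    fun x => (x.1, ⟨(x.2 : ℕ) - 1, lt_of_le_of_lt (Nat.sub_le _ _) x.2.isLt⟩) with he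
  have hmono : ∀ x ∈ S2, wt N q p x.1 x.2 ≤ wt N q p (e x).1 (e x).2 := by
    intro x hx
    have hkey := hmemS2 x hx
    have h12 : (e x).2 ≤ x.2 := by
      simp only [he, Fin.le_def]; exact Nat.sub_le _ _
    have h11 : x.1 ≤ (e x).2 := by
      simp only [he, Fin.le_def]; omega
    have hq2 : q x.2 ≤ q (e x).2 := hsort _ _ h12
    have hq1 : q (e x).2 ≤ q x.1 := hsort _ _ h11
    have hq3 : q x.2 ≤ q x.1 := le_trans hq2 hq1
    rw [wt, wt, min_eq_right hq3, max_eq_left hq3, min_eq_right hq1, max_eq_left hq1]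
    apply max_le_max le_rfl
    have : (1 - p) * q x.2 ≤ (1 - p) * q (e x).2 :=
      mul_le_mul_of_nonneg_left hq2 (by linarith)
    linarith
  have hinj : ∀ x ∈ S2, ∀ y ∈ S2, e x = e y → x = y := by
    intro x hx y hy hxy
    have kx := hmemS2 x hx
    have ky := hmemS2 y hy
    simp only [he, Prod.mk.injEq] at hxy
    have h2 : ((x.2 : ℕ) - 1) = ((y.2 : ℕ) - 1) := congrArg Fin.val hxy.2
    have : (x.2 : ℕ) = (y.2 : ℕ) := by omega
    exact Prod.ext hxy.1 (Fin.ext this)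
  have hpart2 : ∑ x ∈ S2, wt N q p x.1 x.2 ≤ ∑ x ∈ T, wt N q p x.1 x.2 := by
    calc ∑ x ∈ S2, wt N q p x.1 x.2
        ≤ ∑ x ∈ S2, wt N q p (e x).1 (e x).2 := Finset.sum_le_sum hmono
      _ = ∑ y ∈ S2.image e, wt N q p y.1 y.2 := by rw [Finset.sum_image hinj]
      _ ≤ ∑ x ∈ T, wt N q p x.1 x.2 := by
          apply Finset.sum_le_sum_of_subset_of_nonneg
          · intro y hy
            rw [Finset.mem_image] at hy
            obtain ⟨x, hx, rfl⟩ := hy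
            have hkey := hmemS2 x hx
            rw [hS2, hS] at hx
            simp only [Finset.mem_filter, pairsF, Finset.mem_univ, true_and, not_not] at hx
            have hiff := hx.2
            have hpar : (x.1 : ℕ) % 2 = (x.2 : ℕ) % 2 := by
              rcases Nat.mod_two_eq_zero_or_one (x.1 : ℕ) with h1 | h1 <;>
                rcases Nat.mod_two_eq_zero_or_one (x.2 : ℕ) with h2 | h2 <;>
                simp [h1, h2] at hiff ⊢
            rw [hT]
            simp only [Finset.mem_filter, pairsF, Finset.mem_univ, true_and]
            constructor
            · simp only [he, Fin.lt_def]; omega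
            · intro hcon
              rcases Nat.mod_two_eq_zero_or_one (x.1 : ℕ) with h1 | h1 <;>
                rcases Nat.mod_two_eq_zero_or_one ((x.2 : ℕ) - 1) with h2 | h2 <;>
                simp [he, h1, h2] at hcon <;> omega
          · intro x _ _; exact wt_nonneg N q p x.1 x.2
  linarith [hpart1, hpart2]

theorem stmt_13 (N : ℕ) (hN : 1 ≤ N) (q : Fin N → ℝ)
    (hnn : ∀ i, 0 ≤ q i) (hsum : ∑ i, q i = 1)
    (hsort : ∀ i j : Fin N, i ≤ j → q j ≤ q i)
    (p : ℝ) (hp0 : 0 ≤ p) (hp : p ≤ 1 / 2) :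
    guessA N q p (zigzag N) ≤ (1 / 2) * (guess N q + guessOpt N q p) := by
  have hp' : p ≤ 1/2 := hp
  have hZZeq := guessA_eq N q p (zigzag N) hnn hp0 hp'
  have hguess : guess N q = ∑ i, q i + PMS N q := sumC N q
  have hopt : (∑ i, q i) + PMS N q - 2 * cutp N q p (zigzag N) ≤ guessOpt N q p := by
    unfold guessOpt
    apply Finset.le_inf'
    intro A _
    rw [guessA_eq N q p A hnn hp0 hp']
    have := cutp_le N q p A hsort hp'
    linarith
  linarith [hZZeq, hguess, hopt]
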